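/- Every Fermi ellipsoid contains the corresponding quantum blob: for all real symmetric n×n matrices X, Y with X positive definite, {z ∈ ℝ^{2n} : Gz·z ≤ ℏ} ⊆ {z ∈ ℝ^{2n} : M_{XY} z·z ≤ ℏ Tr X}, where G = [[X + Y X⁻¹ Y, Y X⁻¹],[X⁻¹ Y, X⁻¹]] and M_{XY} = [[X² + Y², Y],[Y, I]]. -/

import Mathlib

open Matrix

lemma blockdiag_psd {n : ℕ} {A : Matrix (Fin n) (Fin n) ℝ} (hA : A.PosSemidef) :
    (fromBlocks A 0 0 A).PosSemidef := by
  refine PosSemidef.of_dotProduct_mulVec_nonneg ?_ ?_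
  · have hs : Aᵀ = A := by
      rw [← conjTranspose_eq_transpose_of_trivial]; exact hA.1
    show _ = _
    simp [fromBlocks_conjTranspose, conjTranspose_eq_transpose_of_trivial, fromBlocks_transpose, hs]
  · intro x
    have h1 := hA.dotProduct_mulVec_nonneg (x ∘ Sum.inl)
    have h2 := hA.dotProduct_mulVec_nonneg (x ∘ Sum.inr)
    rw [← Sum.elim_comp_inl_inr x]
    simp only [fromBlocks_mulVec, Function.star_sumElim, sumElim_dotProduct_sumElim,
      Matrix.zero_mulVec, add_zero, zero_add, Sum.elim_comp_inl, Sum.elim_comp_inr]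
    linarith

lemma conj_diag_psd {n : ℕ} (U : Matrix (Fin n) (Fin n) ℝ) (d : Fin n → ℝ)
    (hUU : star U * U = 1) (hd0 : ∀ i, 0 ≤ d i) (X : Matrix (Fin n) (Fin n) ℝ)
    (hXeq : X = U * diagonal d * star U) :
    (X.trace • X - X * X).PosSemidef := by
  subst hXeq
  have htrace : (U * diagonal d * star U).trace = ∑ i, d i := by
    rw [Matrix.mul_assoc, Matrix.trace_mul_comm, Matrix.mul_assoc, hUU, Matrix.mul_one,
      Matrix.trace_diagonal]
  set t : ℝ := (U * diagonal d * star U).trace with ht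
  have hle : ∀ i, d i ≤ t := by
    intro i
    have h1 := Finset.single_le_sum (f := d) (fun j _ => hd0 j) (Finset.mem_univ i)
    linarith [htrace]
  have hstar : star U * (U * diagonal d * star U) = diagonal d * star U := by
    rw [← Matrix.mul_assoc, ← Matrix.mul_assoc, hUU, Matrix.one_mul]
  have hXX : U * diagonal d * star U * (U * diagonal d * star U)
      = U * (diagonal d * diagonal d) * star U := by
    rw [Matrix.mul_assoc (U * diagonal d) (star U) _, hstar]
    noncomm_ring
  have hdd : diagonal (fun i => t * d i - d i * d i)
      = t • diagonal d - diagonal d * diagonal d := by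
    rw [diagonal_mul_diagonal, ← Matrix.diagonal_smul, ← Matrix.diagonal_sub]
    congr 1
  have key : t • (U * diagonal d * star U) - U * diagonal d * star U * (U * diagonal d * star U)
      = U * diagonal (fun i => t * d i - d i * d i) * star U := by
    rw [hXX, hdd, Matrix.mul_sub, Matrix.sub_mul, Matrix.mul_smul, smul_mul_assoc]
  rw [key]
  have hdiag : (diagonal (fun i => t * d i - d i * d i)).PosSemidef := by
    refine posSemidef_diagonal_iff.mpr fun i => ?_
    nlinarith [hd0 i, hle i]
  have := hdiag.mul_mul_conjTranspose_same U
  rwa [← Matrix.star_eq_conjTranspose] at this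

lemma trace_smul_sub_sq_psd {n : ℕ} {X : Matrix (Fin n) (Fin n) ℝ} (hX : X.IsSymm)
    (hXpd : X.PosDef) : (X.trace • X - X * X).PosSemidef := by
  classical
  have hH : X.IsHermitian := by
    rwa [Matrix.IsHermitian, conjTranspose_eq_transpose_of_trivial]
  have hUU : star (hH.eigenvectorUnitary : Matrix (Fin n) (Fin n) ℝ)
      * (hH.eigenvectorUnitary : Matrix (Fin n) (Fin n) ℝ) = 1 :=
    Matrix.mem_unitaryGroup_iff'.mp (hH.eigenvectorUnitary).2
  have hspec : X = (hH.eigenvectorUnitary : Matrix (Fin n) (Fin n) ℝ)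
      * diagonal hH.eigenvalues * star (hH.eigenvectorUnitary : Matrix (Fin n) (Fin n) ℝ) := by
    have := hH.spectral_theorem
    simpa [RCLike.ofReal_real_eq_id] using this
  exact conj_diag_psd _ _ hUU (fun i => (hXpd.eigenvalues_pos i).le) X hspec

theorem covariance_ellipsoid_subset_fermi_ellipsoid
    (n : ℕ) (hn : 1 ≤ n) (ℏ : ℝ) (hℏ : 0 < ℏ)
    (X Y : Matrix (Fin n) (Fin n) ℝ)
    (hX : X.IsSymm) (hY : Y.IsSymm) (hXpd : X.PosDef) :
    {z : Fin n ⊕ Fin n → ℝ |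
        z ⬝ᵥ (fromBlocks (X + Y * X⁻¹ * Y) (Y * X⁻¹) (X⁻¹ * Y) X⁻¹).mulVec z ≤ ℏ} ⊆
      {z : Fin n ⊕ Fin n → ℝ |
        z ⬝ᵥ (fromBlocks (X * X + Y * Y) Y Y 1).mulVec z ≤ ℏ * X.trace} := by
  classical
  intro z hz
  simp only [Set.mem_setOf_eq] at hz ⊢
  have hdet : IsUnit X.det := isUnit_iff_ne_zero.mpr (ne_of_gt hXpd.det_pos)
  have hXi : X * X⁻¹ = 1 := mul_nonsing_inv X hdet
  have hiX : X⁻¹ * X = 1 := nonsing_inv_mul X hdet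
  have hXit : X⁻¹ᵀ = X⁻¹ := by rw [transpose_nonsing_inv, hX.eq]
  set t : ℝ := X.trace with ht
  set A : Matrix (Fin n) (Fin n) ℝ := t • X - X * X with hA
  set N : Matrix (Fin n ⊕ Fin n) (Fin n ⊕ Fin n) ℝ := fromBlocks 1 0 (X⁻¹ * Y) X⁻¹ with hN
  set G : Matrix (Fin n ⊕ Fin n) (Fin n ⊕ Fin n) ℝ :=
    fromBlocks (X + Y * X⁻¹ * Y) (Y * X⁻¹) (X⁻¹ * Y) X⁻¹ with hG
  set M : Matrix (Fin n ⊕ Fin n) (Fin n ⊕ Fin n) ℝ :=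
    fromBlocks (X * X + Y * Y) Y Y 1 with hM
  have hsub : ∀ (P Q R S P' Q' R' S' : Matrix (Fin n) (Fin n) ℝ),
      fromBlocks P Q R S - fromBlocks P' Q' R' S'
        = fromBlocks (P - P') (Q - Q') (R - R') (S - S') := by
    intro P Q R S P' Q' R' S'
    ext (i | i) (j | j) <;> rfl
  have hXi' : ∀ B : Matrix (Fin n) (Fin n) ℝ, X * (X⁻¹ * B) = B := by
    intro B; rw [← Matrix.mul_assoc, hXi, Matrix.one_mul]
  have hiX' : ∀ B : Matrix (Fin n) (Fin n) ℝ, X⁻¹ * (X * B) = B := by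
    intro B; rw [← Matrix.mul_assoc, hiX, Matrix.one_mul]
  have hkey : t • G - M = Nᵀ * fromBlocks A 0 0 A * N := by
    rw [hG, hM, hN, fromBlocks_transpose, fromBlocks_multiply, fromBlocks_multiply,
      fromBlocks_smul, transpose_mul, hXit, hY.eq, transpose_one, transpose_zero, hsub]
    refine fromBlocks_inj.mpr ⟨?_, ?_, ?_, ?_⟩ <;> rw [hA] <;>
      simp only [Matrix.one_mul, Matrix.mul_one, Matrix.mul_zero, Matrix.zero_mul,
        add_zero, zero_add, Matrix.mul_sub, Matrix.sub_mul, Matrix.mul_smul, Matrix.smul_mul,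
        Matrix.mul_assoc, hXi', hiX', hXi, hiX, smul_add, smul_zero] <;>
      abel
  have hApsd : A.PosSemidef := trace_smul_sub_sq_psd hX hXpd
  have hpsd : (t • G - M).PosSemidef := by
    rw [hkey, ← conjTranspose_eq_transpose_of_trivial N]
    exact (blockdiag_psd hApsd).conjTranspose_mul_mul_same N
  have hquad := hpsd.dotProduct_mulVec_nonneg z
  rw [star_trivial, Matrix.sub_mulVec, dotProduct_sub, smul_mulVec, dotProduct_smul,
    smul_eq_mul] at hquad
  have htn : 0 ≤ t := by
    rw [ht, Matrix.trace]
    refine Finset.sum_nonneg fun i _ => ?_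
    have hne : (Pi.single i 1 : Fin n → ℝ) ≠ 0 := by
      intro h
      have := congrFun h i
      simp at this
    have hpos := hXpd.dotProduct_mulVec_pos hne
    have : star (Pi.single i 1 : Fin n → ℝ) ⬝ᵥ X *ᵥ (Pi.single i 1 : Fin n → ℝ) = X i i := by
      simp [dotProduct, Matrix.mulVec, Pi.single_apply]
    rw [this] at hpos
    simpa [Matrix.diag] using hpos.le
  calc z ⬝ᵥ M.mulVec z ≤ t * (z ⬝ᵥ G.mulVec z) := by linarith
    _ ≤ t * ℏ := mul_le_mul_of_nonneg_left hz htn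
    _ = ℏ * t := mul_comm _ _
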